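/- Let G be a d-regular finite simple undirected graph on n vertices (d ≥ 1), let S and S′ be two sets of vertices with |S| = |S′| and a(S) = a(S′), and let η and η′ solve the McAvoy–Allen system for S and S′ respectively. Then Σ_{u,v ∈ V} |N(u) ∩ N(v)| · η(u,v) = Σ_{u,v ∈ V} |N(u) ∩ N(v)| · η′(u,v); in particular, the constant c(G,S) depends on the configuration S only through its size and its number of active edges. -/

import Mathlib

open Finset

variable {V : Type*}

/-- Number of active edges: edges with exactly one endpoint in `S`. -/
def activeCount [Fintype V] [DecidableEq V] (G : SimpleGraph V) [DecidableRel G.Adj]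
    (S : Finset V) : ℕ :=
  (G.edgeFinset.filter (fun e =>
    Sym2.lift ⟨fun u v => xor (decide (u ∈ S)) (decide (v ∈ S)),
      fun u v => Bool.xor_comm _ _⟩ e = true)).card

/-- `η` solves the McAvoy–Allen system for `S` on a `d`-regular graph `G`. -/
def MASolves [Fintype V] [DecidableEq V] (G : SimpleGraph V) [DecidableRel G.Adj]
    (d : ℕ) (S : Finset V) (η : V → V → ℝ) : Prop :=
  (∀ u, η u u = 0) ∧
  ∀ u v, u ≠ v →
    η u v = ((Fintype.card V : ℝ) / 2) *
        |(if u ∈ S then (1 : ℝ) else 0) - (if v ∈ S then (1 : ℝ) else 0)|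
      + (1 / (2 * (d : ℝ))) *
        ((∑ w ∈ G.neighborFinset u, η w v) + (∑ w ∈ G.neighborFinset v, η u w))


def activeGraph [DecidableEq V] (G : SimpleGraph V) [DecidableRel G.Adj] (S : Finset V) :
    SimpleGraph V where
  Adj u v := G.Adj u v ∧ ((u ∈ S) ↔ (v ∉ S))
  symm := ⟨by intro u v ⟨h1, h2⟩; exact ⟨h1.symm, by tauto⟩⟩
  loopless := ⟨by intro u ⟨h1, _⟩; exact G.irrefl h1⟩


section Aux
variable [Fintype V] [DecidableEq V] (G : SimpleGraph V) [DecidableRel G.Adj]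

lemma sum_nbr (d : ℕ) (hreg : G.IsRegularOfDegree d) (f : V → ℝ) :
    ∑ u : V, ∑ w ∈ G.neighborFinset u, f w = (d : ℝ) * ∑ w : V, f w := by
  have h1 : ∀ u : V, ∑ w ∈ G.neighborFinset u, f w
      = ∑ w : V, if w ∈ G.neighborFinset u then f w else 0 := fun u => by
    rw [Finset.sum_ite_mem, Finset.univ_inter]
  simp_rw [h1]
  rw [Finset.sum_comm, Finset.mul_sum]
  refine Finset.sum_congr rfl fun w _ => ?_
  have h2 : ∀ u : V, (if w ∈ G.neighborFinset u then f w else 0)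
      = (if u ∈ G.neighborFinset w then f w else 0) := by
    intro u; simp only [SimpleGraph.mem_neighborFinset, G.adj_comm u w]
  simp_rw [h2]
  rw [Finset.sum_ite_mem, Finset.univ_inter, Finset.sum_const, nsmul_eq_mul]
  congr 1
  exact_mod_cast congrArg Nat.cast (hreg w)

lemma nbr_nbr (u : V) (g : V → ℝ) :
    ∑ v ∈ G.neighborFinset u, ∑ w ∈ G.neighborFinset v, g w
    = ∑ w : V, ((G.neighborFinset u ∩ G.neighborFinset w).card : ℝ) * g w := by
  have h1 : ∀ v : V, ∑ w ∈ G.neighborFinset v, g w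
      = ∑ w : V, if v ∈ G.neighborFinset w then g w else 0 := fun v => by
    have : ∀ w : V, (if v ∈ G.neighborFinset w then g w else 0)
        = (if w ∈ G.neighborFinset v then g w else 0) := by
      intro w; simp only [SimpleGraph.mem_neighborFinset, G.adj_comm w v]
    simp_rw [this]
    rw [Finset.sum_ite_mem, Finset.univ_inter]
  simp_rw [h1]
  rw [Finset.sum_comm]
  refine Finset.sum_congr rfl fun w _ => ?_
  rw [Finset.sum_ite_mem, Finset.sum_const, nsmul_eq_mul]

lemma pair_nbr (g : V → V → ℝ) :
    ∑ u : V, ∑ v ∈ G.neighborFinset u, ∑ w ∈ G.neighborFinset u, g v w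
    = ∑ v : V, ∑ w : V, ((G.neighborFinset v ∩ G.neighborFinset w).card : ℝ) * g v w := by
  have h1 : ∀ u : V, ∑ v ∈ G.neighborFinset u, ∑ w ∈ G.neighborFinset u, g v w
      = ∑ v : V, if u ∈ G.neighborFinset v then (∑ w ∈ G.neighborFinset u, g v w) else 0 := by
    intro u
    have : ∀ v : V, (if u ∈ G.neighborFinset v then (∑ w ∈ G.neighborFinset u, g v w) else 0)
        = (if v ∈ G.neighborFinset u then (∑ w ∈ G.neighborFinset u, g v w) else 0) := by
      intro v; simp only [SimpleGraph.mem_neighborFinset, G.adj_comm u v]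
    simp_rw [this, Finset.sum_ite_mem, Finset.univ_inter]
  simp_rw [h1]
  rw [Finset.sum_comm]
  refine Finset.sum_congr rfl fun v _ => ?_
  have h2 : ∀ u : V, (if u ∈ G.neighborFinset v then (∑ w ∈ G.neighborFinset u, g v w) else 0)
      = ∑ w : V, (if u ∈ G.neighborFinset v ∩ G.neighborFinset w then g v w else 0) := by
    intro u
    by_cases h : u ∈ G.neighborFinset v
    · simp only [h, if_true, Finset.mem_inter, true_and]
      have : ∀ w : V, (if u ∈ G.neighborFinset w then g v w else 0)
          = (if w ∈ G.neighborFinset u then g v w else 0) := by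
        intro w; simp only [SimpleGraph.mem_neighborFinset, G.adj_comm u w]
      simp_rw [this, Finset.sum_ite_mem, Finset.univ_inter]
    · simp only [h, if_false, Finset.mem_inter, false_and, if_false, Finset.sum_const_zero]
  simp_rw [h2]
  rw [Finset.sum_comm]
  refine Finset.sum_congr rfl fun w _ => ?_
  rw [Finset.sum_ite_mem, Finset.univ_inter, Finset.sum_const, nsmul_eq_mul]

instance (S : Finset V) : DecidableRel (activeGraph G S).Adj := fun u v =>
  inferInstanceAs (Decidable (_ ∧ _))

lemma sum_adj_abs (S : Finset V) :
    ∑ u : V, ∑ v ∈ G.neighborFinset u,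
      |(if u ∈ S then (1:ℝ) else 0) - (if v ∈ S then (1:ℝ) else 0)|
    = 2 * ((activeGraph G S).edgeFinset.card : ℝ) := by
  have h1 : ∀ u : V, ∑ v ∈ G.neighborFinset u,
      |(if u ∈ S then (1:ℝ) else 0) - (if v ∈ S then (1:ℝ) else 0)|
      = ∑ v : V, if (activeGraph G S).Adj u v then (1:ℝ) else 0 := by
    intro u
    rw [show ∑ v ∈ G.neighborFinset u,
        |(if u ∈ S then (1:ℝ) else 0) - (if v ∈ S then (1:ℝ) else 0)|
        = ∑ v : V, if v ∈ G.neighborFinset u then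
            |(if u ∈ S then (1:ℝ) else 0) - (if v ∈ S then (1:ℝ) else 0)| else 0 by
      rw [Finset.sum_ite_mem, Finset.univ_inter]]
    refine Finset.sum_congr rfl fun v _ => ?_
    by_cases h : G.Adj u v <;> by_cases hu : u ∈ S <;> by_cases hv : v ∈ S <;>
      simp [activeGraph, h, hu, hv]
  simp_rw [h1]
  rw [← Finset.sum_product']
  rw [Finset.sum_boole]
  have h2 : (filter (fun x : V × V => (activeGraph G S).Adj x.1 x.2) (univ ×ˢ univ))
      = univ.filter fun (x, y) => (activeGraph G S).Adj x y := by
    ext ⟨a, b⟩; simp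
  rw [h2, ← SimpleGraph.two_mul_card_edgeFinset]
  push_cast; ring

lemma sum_all_abs (S : Finset V) :
    ∑ u : V, ∑ v : V,
      |(if u ∈ S then (1:ℝ) else 0) - (if v ∈ S then (1:ℝ) else 0)|
    = 2 * (S.card : ℝ) * ((Fintype.card V : ℝ) - S.card) := by
  have key : ∀ u v : V,
      |(if u ∈ S then (1:ℝ) else 0) - (if v ∈ S then (1:ℝ) else 0)|
      = (if u ∈ S then (1:ℝ) else 0) * (if v ∈ S then (0:ℝ) else 1)
        + (if v ∈ S then (1:ℝ) else 0) * (if u ∈ S then (0:ℝ) else 1) := by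
    intro u v
    by_cases hu : u ∈ S <;> by_cases hv : v ∈ S <;> simp [hu, hv]
  simp_rw [key, Finset.sum_add_distrib, ← Finset.sum_mul, ← Finset.mul_sum]
  have hA : ∑ u : V, (if u ∈ S then (1:ℝ) else 0) = (S.card : ℝ) := by
    rw [Finset.sum_ite_mem, Finset.univ_inter, Finset.sum_const, nsmul_eq_mul, mul_one]
  have hB : ∑ u : V, (if u ∈ S then (0:ℝ) else 1) = (Fintype.card V : ℝ) - S.card := by
    have : ∀ u : V, (if u ∈ S then (0:ℝ) else 1) = 1 - (if u ∈ S then (1:ℝ) else 0) := by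
      intro u; by_cases hu : u ∈ S <;> simp [hu]
    simp_rw [this, Finset.sum_sub_distrib, hA, Finset.sum_const, nsmul_eq_mul, mul_one,
      Finset.card_univ]
  rw [hA, hB, ← Finset.sum_mul, hA]; ring

lemma activeCount_eq (S : Finset V) :
    (G.edgeFinset.filter (fun e =>
      Sym2.lift ⟨fun u v => xor (decide (u ∈ S)) (decide (v ∈ S)),
        fun u v => Bool.xor_comm _ _⟩ e = true)).card
    = (activeGraph G S).edgeFinset.card := by
  congr 1
  ext e
  induction e with
  | _ u v =>
    by_cases hu : u ∈ S <;> by_cases hv : v ∈ S <;>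
      (rw [SimpleGraph.mem_edgeFinset]; simp [hu, hv, activeGraph, Sym2.lift_mk])

lemma sum_nbr_swap (η : V → V → ℝ) :
    ∑ u : V, ∑ v ∈ G.neighborFinset u, η v u
    = ∑ u : V, ∑ v ∈ G.neighborFinset u, η u v := by
  have h1 : ∀ u : V, ∑ v ∈ G.neighborFinset u, η v u
      = ∑ v : V, if u ∈ G.neighborFinset v then η v u else 0 := by
    intro u
    have : ∀ v : V, (if u ∈ G.neighborFinset v then η v u else 0)
        = (if v ∈ G.neighborFinset u then η v u else 0) := by
      intro v; simp only [SimpleGraph.mem_neighborFinset, G.adj_comm u v]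
    simp_rw [this, Finset.sum_ite_mem, Finset.univ_inter]
  simp_rw [h1]
  rw [Finset.sum_comm]
  refine Finset.sum_congr rfl fun v _ => ?_
  rw [Finset.sum_ite_mem, Finset.univ_inter]

lemma key_value (d : ℕ) (hd : 1 ≤ d) (hreg : G.IsRegularOfDegree d) (S : Finset V)
    (η : V → V → ℝ) (h0 : ∀ u, η u u = 0)
    (hrec : ∀ u v, u ≠ v →
      η u v = ((Fintype.card V : ℝ) / 2) *
          |(if u ∈ S then (1 : ℝ) else 0) - (if v ∈ S then (1 : ℝ) else 0)|
        + (1 / (2 * (d : ℝ))) *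
          ((∑ w ∈ G.neighborFinset u, η w v) + (∑ w ∈ G.neighborFinset v, η u w)))
    (habs_all : ∑ u : V, ∑ v : V,
        |(if u ∈ S then (1:ℝ) else 0) - (if v ∈ S then (1:ℝ) else 0)|
      = 2 * (S.card : ℝ) * ((Fintype.card V : ℝ) - S.card))
    (a : ℝ)
    (habs_adj : ∑ u : V, ∑ v ∈ G.neighborFinset u,
        |(if u ∈ S then (1:ℝ) else 0) - (if v ∈ S then (1:ℝ) else 0)|
      = 2 * a) :
    ∑ u : V, ∑ v : V, ((G.neighborFinset u ∩ G.neighborFinset v).card : ℝ) * η u v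
    = (d : ℝ) * ((d : ℝ) * (Fintype.card V : ℝ) * (S.card : ℝ)
        * ((Fintype.card V : ℝ) - (S.card : ℝ))
      - (Fintype.card V : ℝ) * a) := by
  set n : ℝ := (Fintype.card V : ℝ) with hn
  set c : ℝ := 1 / (2 * (d : ℝ)) with hc
  have hd0 : (d : ℝ) ≠ 0 := Nat.cast_ne_zero.2 (by omega)
  set T : ℝ := ∑ u : V, ∑ v : V, η u v with hT
  set E : ℝ := ∑ u : V, ∑ v ∈ G.neighborFinset u, η u v with hE
  set Q : ℝ := ∑ u : V, ∑ v : V,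
      ((G.neighborFinset u ∩ G.neighborFinset v).card : ℝ) * η u v with hQ
  -- per-row identity
  have hrow : ∀ u : V, ∑ v : V, η u v
      = (∑ v : V, ((n / 2) *
            |(if u ∈ S then (1 : ℝ) else 0) - (if v ∈ S then (1 : ℝ) else 0)|
          + c * ((∑ w ∈ G.neighborFinset u, η w v) + (∑ w ∈ G.neighborFinset v, η u w))))
        - c * ((∑ w ∈ G.neighborFinset u, η w u) + (∑ w ∈ G.neighborFinset u, η u w)) := by
    intro u
    have h1 : ∑ v : V, η u v = ∑ v ∈ univ.erase u, η u v := by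
      rw [Finset.sum_erase_eq_sub (Finset.mem_univ u), h0 u, sub_zero]
    have h2 : ∑ v ∈ univ.erase u, η u v
        = ∑ v ∈ univ.erase u, ((n / 2) *
            |(if u ∈ S then (1 : ℝ) else 0) - (if v ∈ S then (1 : ℝ) else 0)|
          + c * ((∑ w ∈ G.neighborFinset u, η w v) + (∑ w ∈ G.neighborFinset v, η u w))) :=
      Finset.sum_congr rfl fun v hv => hrec u v (Ne.symm (Finset.ne_of_mem_erase hv))
    rw [h1, h2, Finset.sum_erase_eq_sub (Finset.mem_univ u)]
    congr 1
    rw [sub_self, abs_zero, mul_zero, zero_add]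
  -- sum the row identity over u
  have hsum1 : T = (n / 2) * (2 * (S.card : ℝ) * (n - (S.card : ℝ)))
      + c * ((d : ℝ) * T + (d : ℝ) * T) - c * (E + E) := by
    have e0 : T = ∑ u : V, ((∑ v : V, ((n / 2) *
            |(if u ∈ S then (1 : ℝ) else 0) - (if v ∈ S then (1 : ℝ) else 0)|
          + c * ((∑ w ∈ G.neighborFinset u, η w v) + (∑ w ∈ G.neighborFinset v, η u w))))
        - c * ((∑ w ∈ G.neighborFinset u, η w u) + (∑ w ∈ G.neighborFinset u, η u w))) := by
      rw [hT]; exact Finset.sum_congr rfl fun u _ => hrow u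
    have eA1 : ∑ u : V, ∑ v : V, ∑ w ∈ G.neighborFinset u, η w v = (d : ℝ) * T := by
      have hcm : ∀ u : V, ∑ v : V, ∑ w ∈ G.neighborFinset u, η w v
          = ∑ w ∈ G.neighborFinset u, ∑ v : V, η w v := fun u => Finset.sum_comm
      simp_rw [hcm]
      rw [sum_nbr G d hreg (fun w => ∑ v : V, η w v), ← hT]
    have eA2 : ∑ u : V, ∑ v : V, ∑ w ∈ G.neighborFinset v, η u w = (d : ℝ) * T := by
      rw [Finset.sum_comm]
      have hcm : ∀ v : V, ∑ u : V, ∑ w ∈ G.neighborFinset v, η u w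
          = ∑ w ∈ G.neighborFinset v, ∑ u : V, η u w := fun v => Finset.sum_comm
      simp_rw [hcm]
      rw [sum_nbr G d hreg (fun w => ∑ u : V, η u w)]
      congr 1
      rw [Finset.sum_comm, ← hT]
    have eA : ∑ u : V, (∑ v : V, ((n / 2) *
            |(if u ∈ S then (1 : ℝ) else 0) - (if v ∈ S then (1 : ℝ) else 0)|
          + c * ((∑ w ∈ G.neighborFinset u, η w v) + (∑ w ∈ G.neighborFinset v, η u w))))
        = (n / 2) * (2 * (S.card : ℝ) * (n - (S.card : ℝ)))
          + c * ((d : ℝ) * T + (d : ℝ) * T) := by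
      simp_rw [Finset.sum_add_distrib, ← Finset.mul_sum, Finset.sum_add_distrib]
      rw [habs_all, eA1, eA2]
    have eB : ∑ u : V, c * ((∑ w ∈ G.neighborFinset u, η w u)
          + (∑ w ∈ G.neighborFinset u, η u w)) = c * (E + E) := by
      rw [← Finset.mul_sum, Finset.sum_add_distrib, sum_nbr_swap, hE]
    refine e0.trans ?_
    rw [Finset.sum_sub_distrib, eA, eB]
  -- sum over adjacent pairs
  have hsum2 : E = (n / 2) * (2 * a) + c * (Q + Q) := by
    have e0 : E = ∑ u : V, ∑ v ∈ G.neighborFinset u, ((n / 2) *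
            |(if u ∈ S then (1 : ℝ) else 0) - (if v ∈ S then (1 : ℝ) else 0)|
          + c * ((∑ w ∈ G.neighborFinset u, η w v) + (∑ w ∈ G.neighborFinset v, η u w))) := by
      rw [hE]
      refine Finset.sum_congr rfl fun u _ => Finset.sum_congr rfl fun v hv => ?_
      exact hrec u v (G.ne_of_adj (by rwa [← SimpleGraph.mem_neighborFinset]))
    have eQ1 : ∑ u : V, ∑ v ∈ G.neighborFinset u, ∑ w ∈ G.neighborFinset u, η w v = Q := by
      rw [pair_nbr G (fun v w => η w v)]
      refine (Finset.sum_comm.trans ?_)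
      refine (Finset.sum_congr rfl fun w _ => Finset.sum_congr rfl fun v _ => ?_).trans hQ.symm
      rw [Finset.inter_comm]
    have eQ2 : ∑ u : V, ∑ v ∈ G.neighborFinset u, ∑ w ∈ G.neighborFinset v, η u w = Q := by
      have hn2 : ∀ u : V, ∑ v ∈ G.neighborFinset u, ∑ w ∈ G.neighborFinset v, η u w
          = ∑ w : V, ((G.neighborFinset u ∩ G.neighborFinset w).card : ℝ) * η u w :=
        fun u => nbr_nbr G u (fun w => η u w)
      simp_rw [hn2]
      exact hQ.symm
    refine e0.trans ?_
    simp_rw [Finset.sum_add_distrib, ← Finset.mul_sum, Finset.sum_add_distrib]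
    rw [habs_adj, eQ1, eQ2]
  -- algebra
  have hcc : c * ((d : ℝ) * T + (d : ℝ) * T) = T := by
    rw [hc]; field_simp; ring
  have hcE : c * (E + E) = E / d := by rw [hc]; field_simp; ring
  have hcQ : c * (Q + Q) = Q / d := by rw [hc]; field_simp; ring
  rw [hcc, hcE] at hsum1
  rw [hcQ] at hsum2
  have hEval : E = (d : ℝ) * n * (S.card : ℝ) * (n - (S.card : ℝ)) := by
    have h' : E / d = n * (S.card : ℝ) * (n - (S.card : ℝ)) := by
      have : (n / 2) * (2 * (S.card : ℝ) * (n - (S.card : ℝ)))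
          = n * (S.card : ℝ) * (n - (S.card : ℝ)) := by ring
      linarith [hsum1, this]
    rw [div_eq_iff hd0] at h'
    rw [h']; ring
  have hQval : Q / d = E - n * a := by
    have : (n / 2) * (2 * a) = n * a := by ring
    linarith [hsum2, this]
  rw [div_eq_iff hd0] at hQval
  rw [hQval, hEval]; ring
end Aux

theorem constant_depends_only_on_size_and_active [Fintype V] [DecidableEq V]
    (G : SimpleGraph V) [DecidableRel G.Adj]
    (d : ℕ) (hd : 1 ≤ d) (hreg : G.IsRegularOfDegree d)
    (S S' : Finset V) (hcard : S.card = S'.card)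
    (hactive : activeCount G S = activeCount G S')
    (η η' : V → V → ℝ) (hη : MASolves G d S η) (hη' : MASolves G d S' η') :
    ∑ u : V, ∑ v : V, ((G.neighborFinset u ∩ G.neighborFinset v).card : ℝ) * η u v
    = ∑ u : V, ∑ v : V, ((G.neighborFinset u ∩ G.neighborFinset v).card : ℝ) * η' u v := by
  obtain ⟨h0, hrec⟩ := hη
  obtain ⟨h0', hrec'⟩ := hη'
  have h1 := key_value G d hd hreg S η h0 hrec (sum_all_abs S)
    (((activeGraph G S).edgeFinset.card : ℝ)) (sum_adj_abs G S)
  have h2 := key_value G d hd hreg S' η' h0' hrec' (sum_all_abs S')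
    (((activeGraph G S').edgeFinset.card : ℝ)) (sum_adj_abs G S')
  rw [h1, h2]
  have hc' : ((S.card : ℝ)) = (S'.card : ℝ) := by exact_mod_cast hcard
  have ha : (activeGraph G S).edgeFinset.card = (activeGraph G S').edgeFinset.card := by
    rw [← activeCount_eq, ← activeCount_eq]
    exact hactive
  rw [hc', ha]
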